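/- Let (F, r) be a faithful maniplex of rank n, let j ∈ Fin n, and let u and v be flags lying in the same j-face, i.e., v ∈ M_{Fin n ∖ {j}}(u). Then v is not j-adjacent to u, that is, v ≠ r_j u. -/
import Mathlib



/-- The orbit of a flag `u` under the subgroup generated by `{r j : j ∈ J}`. -/
def MOrbit {n : ℕ} {F : Type*} (r : Fin n → Equiv.Perm F) (J : Set (Fin n)) (u : F) :
    Set F :=
  {v | ∃ g ∈ Subgroup.closure (r '' J), v = g u}

/-- `(F, r)` is a maniplex of rank `n`. -/
def IsManiplex {F : Type*} (n : ℕ) (r : Fin n → Equiv.Perm F) : Prop :=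
  Nonempty F ∧
  (∀ (i : Fin n) (u : F), r i (r i u) = u) ∧
  (∀ (i : Fin n) (u : F), r i u ≠ u) ∧
  (∀ u v : F, v ∈ MOrbit r Set.univ u) ∧
  ∀ i j : Fin n, 1 < |(i : ℤ) - (j : ℤ)| →
    (∀ u : F, r i (r j (r i (r j u))) = u) ∧ ∀ u : F, r i (r j u) ≠ u

/-- The `i`-face containing the flag `u`. -/
def MFace {n : ℕ} {F : Type*} (r : Fin n → Equiv.Perm F) (i : Fin n) (u : F) : Set F :=
  MOrbit r {i}ᶜ u

/-- A maniplex is faithful if the intersection of all faces containing a flag is a singleton. -/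
def IsFaithful {n : ℕ} {F : Type*} (r : Fin n → Equiv.Perm F) : Prop :=
  ∀ u : F, (⋂ i : Fin n, MFace r i u) = {u}

/-- `O` is a face of rank `k ∈ {-1, …, n}`, where the improper ranks `-1` and `n`
give the whole flag set. -/
def IsRankFace {n : ℕ} {F : Type*} (r : Fin n → Equiv.Perm F) (k : ℤ) (O : Set F) : Prop :=
  ((∃ i : Fin n, (i : ℤ) = k) ∧ ∃ u : F, O = MOrbit r {j : Fin n | (j : ℤ) ≠ k} u) ∨
  ((¬ ∃ i : Fin n, (i : ℤ) = k) ∧ O = Set.univ)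

/-- A maniplex is thin if any incident pair of an `(i-1)`-face and `(i+1)`-face lies in
exactly two `i`-faces. -/
def IsThin {n : ℕ} {F : Type*} (r : Fin n → Equiv.Perm F) : Prop :=
  ∀ (i : Fin n) (Fm Fp : Set F),
    IsRankFace r ((i : ℤ) - 1) Fm → IsRankFace r ((i : ℤ) + 1) Fp →
    (Fm ∩ Fp).Nonempty →
    ∃ O₁ O₂ : Set F, O₁ ≠ O₂ ∧
      {O : Set F | (∃ u : F, O = MFace r i u) ∧ (O ∩ (Fm ∩ Fp)).Nonempty} = {O₁, O₂}

/-- The component intersection property. -/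
def HasCIP {n : ℕ} {F : Type*} (r : Fin n → Equiv.Perm F) : Prop :=
  ∀ (k : ℕ) (j : Fin k → Fin n) (H : Fin k → Set F),
    Function.Injective j →
    (∀ l, ∃ u : F, H l = MFace r (j l) u) →
    (∀ l m, (H l ∩ H m).Nonempty) →
    ∀ u v : F, u ∈ ⋂ l, H l → v ∈ ⋂ l, H l →
      v ∈ MOrbit r {m : Fin n | m ∉ Set.range j} u

/-- An automorphism of a maniplex: a permutation of the flags commuting with every `r i`. -/
def IsManiplexAuto {n : ℕ} {F : Type*} (r : Fin n → Equiv.Perm F) (φ : Equiv.Perm F) : Prop :=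
  ∀ (i : Fin n) (u : F), φ (r i u) = r i (φ u)

/-- A maniplex is regular if its automorphism group is transitive on flags. -/
def IsRegularManiplex {n : ℕ} {F : Type*} (r : Fin n → Equiv.Perm F) : Prop :=
  ∀ u v : F, ∃ φ : Equiv.Perm F, IsManiplexAuto r φ ∧ φ u = v

/-- A face `H`, an orbit of the subgroup generated by `{r j : j ∈ J}`, is bipartite. -/
def FaceBipartite {n : ℕ} {F : Type*} (r : Fin n → Equiv.Perm F) (J : Set (Fin n))
    (H : Set F) : Prop :=
  ∃ f : F → ZMod 2, ∀ j ∈ J, ∀ x ∈ H, f (r j x) = f x + 1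

/-- The number of `i`-faces of a maniplex. -/
noncomputable def NumFaces {n : ℕ} {F : Type*} (r : Fin n → Equiv.Perm F) (i : Fin n) : ℕ :=
  {O : Set F | ∃ u : F, O = MFace r i u}.ncard

/-- The canonical double cover of a maniplex. -/
def cdc {n : ℕ} {F : Type*} (r : Fin n → Equiv.Perm F) (i : Fin n) :
    Equiv.Perm (F × ZMod 2) :=
  Equiv.prodCongr (r i) (Equiv.addRight (1 : ZMod 2))

/-- The raviolo of a maniplex of rank `n`: a maniplex of rank `n+1` with two facets. -/
def raviolo {n : ℕ} {F : Type*} (r : Fin n → Equiv.Perm F) (i : Fin (n + 1)) :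
    Equiv.Perm (F × ZMod 2) :=
  if h : (i : ℕ) < n then Equiv.prodCongr (r ⟨i, h⟩) (Equiv.refl (ZMod 2))
  else Equiv.prodCongr (Equiv.refl F) (Equiv.addRight (1 : ZMod 2))

/-- A voltage assignment on a maniplex. -/
def IsVoltage {n : ℕ} {F : Type*} {G : Type*} [Group G] (r : Fin n → Equiv.Perm F)
    (ζ : F × Fin n → G) : Prop :=
  ∀ (u : F) (i : Fin n), ζ (r i u, i) = (ζ (u, i))⁻¹

/-- The permutations of the derived cover of a maniplex with voltage assignment `ζ`. -/
def mcov {n : ℕ} {F : Type*} {G : Type*} [Group G] (r : Fin n → Equiv.Perm F)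
    (ζ : F × Fin n → G) (i : Fin n) : Equiv.Perm (F × G) where
  toFun p := (r i p.1, ζ (p.1, i) * p.2)
  invFun p := ((r i).symm p.1, (ζ ((r i).symm p.1, i))⁻¹ * p.2)
  left_inv p := by simp
  right_inv p := by simp

/-- In a faithful maniplex, two flags on the same `j`-face are not `j`-adjacent. -/
theorem stmt1 {n : ℕ} {F : Type*} [Fintype F] (r : Fin n → Equiv.Perm F)
    (hM : IsManiplex n r) (hf : IsFaithful r)
    (j : Fin n) (u v : F) (hv : v ∈ MOrbit r {j}ᶜ u) : v ≠ r j u := by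
  intro h
  apply hM.2.2.1 j u
  have hmem : r j u ∈ ⋂ i : Fin n, MFace r i u := by
    rw [Set.mem_iInter]
    intro i
    by_cases hij : i = j
    · subst hij; exact h ▸ hv
    · exact ⟨r j, Subgroup.subset_closure ⟨j, by simp [Ne.symm hij], rfl⟩, rfl⟩
  rw [hf u] at hmem
  exact hmem
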